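/- Let A be a symmetrizable GCM, Y a subdiagram of its Dynkin diagram of affine type with null root δ_Y, and β a root of A with (β, δ_Y) = 0. Then the support of β is contained in Y ⊔ Y⊥, where Y⊥ is the set of vertices not in Y and not adjacent to Y. -/
import Mathlib


set_option synthInstance.maxHeartbeats 1000000
set_option maxHeartbeats 1000000

/-- A generalized Cartan matrix (GCM). -/
def IsGCM {ι : Type*} (A : Matrix ι ι ℤ) : Prop :=
  (∀ i, A i i = 2) ∧ (∀ i j, i ≠ j → A i j ≤ 0) ∧ (∀ i j, A i j = 0 → A j i = 0)

/-- An indecomposable matrix (connected Dynkin diagram). -/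
def IsIndecomposable {ι : Type*} (A : Matrix ι ι ℤ) : Prop :=
  ∀ s : Set ι, s.Nonempty → sᶜ.Nonempty → ∃ i ∈ s, ∃ j ∈ sᶜ, A i j ≠ 0

/-- An abstract model of the root-lattice data of a symmetrizable Kac-Moody algebra `g(A)`:
the root lattice is realized inside `ι → ℚ`, simple roots being the coordinate vectors;
together with the root system, real/imaginary roots, invariant symmetric bilinear form,
coroot pairing `⟨β∨, γ⟩`, root strings and simple reflections. -/
structure KacMoodyRootSystem (ι : Type) [Fintype ι] [DecidableEq ι] where
  A : Matrix ι ι ℤ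
  isGCM : IsGCM A
  d : ι → ℚ
  d_pos : ∀ i, 0 < d i
  d_symm : ∀ i j, d i * A i j = d j * A j i
  roots : Set (ι → ℚ)
  realRoots : Set (ι → ℚ)
  imRoots : Set (ι → ℚ)
  real_sub : realRoots ⊆ roots
  im_sub : imRoots ⊆ roots
  roots_eq_union : roots = realRoots ∪ imRoots
  zero_not_root : (0 : ι → ℚ) ∉ roots
  neg_root : ∀ α ∈ roots, -α ∈ roots
  neg_real : ∀ α ∈ realRoots, -α ∈ realRoots
  simple_real : ∀ i, Pi.single i 1 ∈ realRoots
  root_int : ∀ α ∈ roots, ∀ i, ∃ k : ℤ, α i = (k : ℚ)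
  root_sign : ∀ α ∈ roots, (∀ i, 0 ≤ α i) ∨ (∀ i, α i ≤ 0)
  root_connected : ∀ α ∈ roots, ∀ s : Set ι,
      (∃ i ∈ s, α i ≠ 0) → (∃ j ∉ s, α j ≠ 0) →
      ∃ i ∈ s, ∃ j ∉ s, α i ≠ 0 ∧ α j ≠ 0 ∧ A i j ≠ 0
  form : (ι → ℚ) →ₗ[ℚ] (ι → ℚ) →ₗ[ℚ] ℚ
  form_symm : ∀ x y, form x y = form y x
  form_simple : ∀ i j, form (Pi.single i 1) (Pi.single j 1) = d i * A i j
  real_norm_pos : ∀ α ∈ realRoots, 0 < form α α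
  im_norm_nonpos : ∀ α ∈ imRoots, form α α ≤ 0
  root_norm_criterion : ∀ α ∈ roots, 0 < form α α → α ∈ realRoots
  pairing : (ι → ℚ) → (ι → ℚ) → ℤ
  pairing_eq : ∀ α ∈ realRoots, ∀ x, form α α * (pairing α x : ℚ) = 2 * form α x
  rootString : ∀ β ∈ realRoots, ∀ γ ∈ roots, γ ≠ β → γ ≠ -β →
      ∃ p q : ℕ, ((p : ℤ) - (q : ℤ) = pairing β γ ∧
        ∀ k : ℤ, γ + (k : ℚ) • β ∈ roots ↔ -(p : ℤ) ≤ k ∧ k ≤ (q : ℤ))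
  reflection : ι → ((ι → ℚ) ≃ₗ[ℚ] (ι → ℚ))
  reflection_apply : ∀ i x,
      reflection i x = x - (pairing (Pi.single i 1) x : ℚ) • (Pi.single i 1 : ι → ℚ)
  reflection_root : ∀ i, ∀ α ∈ roots, reflection i α ∈ roots
  reflection_real : ∀ i, ∀ α ∈ realRoots, reflection i α ∈ realRoots
  reflection_im : ∀ i, ∀ α ∈ imRoots, reflection i α ∈ imRoots
  reflection_form : ∀ i x y, form (reflection i x) (reflection i y) = form x y
  reflection_pos : ∀ i, ∀ α ∈ realRoots, (∀ j, 0 ≤ α j) → α ≠ Pi.single i 1 →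
      ∀ j, 0 ≤ reflection i α j

namespace KacMoodyRootSystem

variable {ι : Type} [Fintype ι] [DecidableEq ι]

/-- The Weyl group `W(A)`, generated by the simple reflections. -/
def Weyl (K : KacMoodyRootSystem ι) : Subgroup ((ι → ℚ) ≃ₗ[ℚ] (ι → ℚ)) :=
  Subgroup.closure (Set.range K.reflection)

/-- The standard parabolic subgroup `W(S)` generated by the simple reflections at `S`. -/
def ParabolicWeyl (K : KacMoodyRootSystem ι) (S : Set ι) :
    Subgroup ((ι → ℚ) ≃ₗ[ℚ] (ι → ℚ)) :=
  Subgroup.closure (K.reflection '' S)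

/-- `Y⊥`: vertices neither in `Y` nor adjacent to `Y`. -/
def Perp (K : KacMoodyRootSystem ι) (Y : Set ι) : Set ι :=
  {p | p ∉ Y ∧ ∀ q ∈ Y, K.A p q = 0}

/-- A π-system: a family of distinct real roots whose pairwise differences are not roots. -/
def IsPiSys (K : KacMoodyRootSystem ι) {κ : Type} (β : κ → (ι → ℚ)) : Prop :=
  Function.Injective β ∧ (∀ i, β i ∈ K.realRoots) ∧
    ∀ i j, i ≠ j → β i - β j ∉ K.roots

/-- A π-system of type `B`: a π-system whose matrix `M(Σ) = (⟨βᵢ∨, βⱼ⟩)` equals `B`. -/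
def IsPiSysOfType (K : KacMoodyRootSystem ι) {κ : Type} (β : κ → (ι → ℚ))
    (B : Matrix κ κ ℤ) : Prop :=
  K.IsPiSys β ∧ ∀ i j, K.pairing (β i) (β j) = B i j

/-- `δ` is the null root of an affine-type subdiagram `Y`: it is a positive imaginary
isotropic root supported exactly on `Y`, orthogonal to all simple roots of `Y`. -/
def IsAffineNullRoot (K : KacMoodyRootSystem ι) (Y : Set ι) (δ : ι → ℚ) : Prop :=
  (∀ q, δ q ≠ 0 ↔ q ∈ Y) ∧ (∀ q, 0 ≤ δ q) ∧ (∀ q, ∃ k : ℤ, δ q = (k : ℚ)) ∧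
    δ ∈ K.imRoots ∧ (∀ q ∈ Y, K.form δ (Pi.single q 1) = 0) ∧ K.form δ δ = 0

end KacMoodyRootSystem

/-- If Y is an affine subdiagram with null root δ_Y and β is a root with
(β, δ_Y) = 0, then the support of β is contained in Y ⊔ Y⊥. -/
lemma form_expand {ι : Type} [Fintype ι] [DecidableEq ι]
    (K : KacMoodyRootSystem ι) (x y : ι → ℚ) :
    K.form x y = ∑ p, x p * K.form (Pi.single p 1) y := by
  have hx : x = ∑ p, x p • (Pi.single p 1 : ι → ℚ) := by
    ext j
    simp [Finset.sum_apply, Pi.single_apply]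
  conv_lhs => rw [hx]
  simp [map_sum, smul_eq_mul]

lemma form_delta_single_nonpos {ι : Type} [Fintype ι] [DecidableEq ι]
    (K : KacMoodyRootSystem ι) (Y : Set ι) (δY : ι → ℚ)
    (hY : K.IsAffineNullRoot Y δY) (p : ι) (hp : p ∉ Y) :
    ∀ q, δY q * (K.d q * K.A q p) ≤ 0 := by
  intro q
  rcases eq_or_ne (δY q) 0 with h | h
  · simp [h]
  · have hqY : q ∈ Y := (hY.1 q).1 h
    have hδpos : 0 < δY q := lt_of_le_of_ne (hY.2.1 q) (Ne.symm h)
    have hne : q ≠ p := fun e => hp (e ▸ hqY)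
    have hA : K.A q p ≤ 0 := K.isGCM.2.1 q p hne
    have : K.d q * K.A q p ≤ 0 :=
      mul_nonpos_of_nonneg_of_nonpos (le_of_lt (K.d_pos q)) (by exact_mod_cast hA)
    exact mul_nonpos_of_nonneg_of_nonpos (le_of_lt hδpos) this

lemma form_single_delta {ι : Type} [Fintype ι] [DecidableEq ι]
    (K : KacMoodyRootSystem ι) (δY : ι → ℚ) (p : ι) :
    K.form (Pi.single p 1) δY = ∑ q, δY q * (K.d q * K.A q p) := by
  rw [K.form_symm, form_expand]
  congr 1; ext q
  rw [K.form_simple]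

/-- Main argument for nonnegative β. -/
lemma support_sub_aux {ι : Type} [Fintype ι] [DecidableEq ι]
    (K : KacMoodyRootSystem ι) (Y : Set ι) (δY : ι → ℚ)
    (hY : K.IsAffineNullRoot Y δY)
    (β : ι → ℚ) (hβpos : ∀ i, 0 ≤ β i) (hperp : K.form β δY = 0) :
    ∀ p, β p ≠ 0 → p ∈ Y ∪ K.Perp Y := by
  intro p hp
  by_cases hpY : p ∈ Y
  · exact Or.inl hpY
  -- each term of the expansion of form β δY is nonpositive
  have hterm : ∀ r : ι, β r * K.form (Pi.single r 1) δY ≤ 0 := by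
    intro r
    by_cases hrY : r ∈ Y
    · rw [K.form_symm, hY.2.2.2.2.1 r hrY]; simp
    · have h1 : K.form (Pi.single r 1) δY ≤ 0 := by
        rw [form_single_delta]
        exact Finset.sum_nonpos fun q _ => form_delta_single_nonpos K Y δY hY r hrY q
      exact mul_nonpos_of_nonneg_of_nonpos (hβpos r) h1
  have hsum : ∑ r, β r * K.form (Pi.single r 1) δY = 0 := by
    rw [← form_expand, hperp]
  have hzero : ∀ r ∈ Finset.univ, β r * K.form (Pi.single r 1) δY = 0 :=
    (Finset.sum_eq_zero_iff_of_nonpos fun r _ => hterm r).mp hsum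
  have hβp : 0 < β p := lt_of_le_of_ne (hβpos p) (Ne.symm hp)
  have hfp : K.form (Pi.single p 1) δY = 0 := by
    have := hzero p (Finset.mem_univ p)
    rcases mul_eq_zero.mp this with h | h
    · exact absurd h hp
    · exact h
  -- now all terms in the q-sum are zero
  rw [form_single_delta] at hfp
  have hqzero : ∀ q ∈ Finset.univ, δY q * (K.d q * K.A q p) = 0 :=
    (Finset.sum_eq_zero_iff_of_nonpos fun q _ =>
      form_delta_single_nonpos K Y δY hY p hpY q).mp hfp
  refine Or.inr ⟨hpY, fun q hqY => ?_⟩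
  have hδq : δY q ≠ 0 := (hY.1 q).2 hqY
  have hd : (K.d q : ℚ) ≠ 0 := ne_of_gt (K.d_pos q)
  have := hqzero q (Finset.mem_univ q)
  have hAqp : K.A q p = 0 := by
    rcases mul_eq_zero.mp this with h | h
    · exact absurd h hδq
    · rcases mul_eq_zero.mp h with h | h
      · exact absurd h hd
      · exact_mod_cast h
  exact K.isGCM.2.2 q p hAqp

theorem support_sub_of_orthogonal_nullroot {ι : Type} [Fintype ι] [DecidableEq ι]
    (K : KacMoodyRootSystem ι) (Y : Set ι) (δY : ι → ℚ)
    (hY : K.IsAffineNullRoot Y δY)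
    (β : ι → ℚ) (hβ : β ∈ K.roots) (hperp : K.form β δY = 0) :
    ∀ p, β p ≠ 0 → p ∈ Y ∪ K.Perp Y := by
  rcases K.root_sign β hβ with hpos | hneg
  · exact support_sub_aux K Y δY hY β hpos hperp
  · intro p hp
    have hperp' : K.form (-β) δY = 0 := by simp [hperp]
    have hpos : ∀ i, 0 ≤ (-β) i := fun i => by simpa using hneg i
    exact support_sub_aux K Y δY hY (-β) hpos hperp' p (by simpa using hp)
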